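/- Let H be a finite-dimensional complex inner product space, let Π and Δ be orthogonal projections on H, and let U = (2Π − I)(2Δ − I). Then for every ψ ∈ ker Π, the generic catalyst expression simplifies: (Π − ΠUΠ)⁺ Π U ψ = (Π − ΠΔΠ)⁺ Δ ψ. -/

import Mathlib

open LinearMap

/-- The four Moore–Penrose equations: `B` is the Moore–Penrose pseudoinverse of `A`. -/
def IsMPInv {H : Type*} [NormedAddCommGroup H] [InnerProductSpace ℂ H]
    [FiniteDimensional ℂ H] (A B : H →ₗ[ℂ] H) : Prop :=
  A ∘ₗ B ∘ₗ A = A ∧ B ∘ₗ A ∘ₗ B = B ∧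
    adjoint (A ∘ₗ B) = A ∘ₗ B ∧ adjoint (B ∘ₗ A) = B ∘ₗ A

/-- Uniqueness of the Moore–Penrose pseudoinverse, in any `*`-semigroup. -/
lemma mp_unique' {R : Type*} [Semigroup R] [StarMul R] {a b c : R}
    (h1 : a*b*a = a) (h2 : b*a*b = b) (h3 : star (a*b) = a*b) (h4 : star (b*a) = b*a)
    (h1' : a*c*a = a) (h2' : c*a*c = c) (h3' : star (a*c) = a*c) (h4' : star (c*a) = c*a) :
    b = c := by
  have hab : a*b = a*c := by
    calc a*b = (a*c*a)*b := by rw [h1']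
    _ = (a*c)*(a*b) := by rw [mul_assoc]
    _ = star (a*c) * star (a*b) := by rw [h3, h3']
    _ = star ((a*b)*(a*c)) := by rw [← star_mul]
    _ = star ((a*b*a)*c) := by simp only [mul_assoc]
    _ = a*c := by rw [h1, h3']
  have hba : b*a = c*a := by
    calc b*a = b*(a*c*a) := by rw [h1']
    _ = (b*a)*(c*a) := by simp only [mul_assoc]
    _ = star (b*a) * star (c*a) := by rw [h4, h4']
    _ = star ((c*a)*(b*a)) := by rw [← star_mul]
    _ = star (c*(a*b*a)) := by simp only [mul_assoc]
    _ = c*a := by rw [h1, h4']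
  calc b = b*a*b := h2.symm
  _ = c*a*b := by rw [hba]
  _ = c*(a*c) := by rw [mul_assoc, hab]
  _ = c := by rw [← mul_assoc, h2']

/-- For `U = (2Π − I)(2Δ − I)` and `ψ ∈ ker Π`, the generic catalyst simplifies:
`(Π − ΠUΠ)⁺ Π U ψ = (Π − ΠΔΠ)⁺ Δ ψ`. -/
theorem stmt5 {H : Type*} [NormedAddCommGroup H] [InnerProductSpace ℂ H]
    [FiniteDimensional ℂ H]
    (Pr Dl : H →ₗ[ℂ] H)
    (hPr : Pr ∘ₗ Pr = Pr) (hPra : adjoint Pr = Pr)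
    (hDl : Dl ∘ₗ Dl = Dl) (hDla : adjoint Dl = Dl)
    (U : H →ₗ[ℂ] H)
    (hU : U = ((2 : ℂ) • Pr - LinearMap.id) ∘ₗ ((2 : ℂ) • Dl - LinearMap.id))
    (B : H →ₗ[ℂ] H) (hB : IsMPInv (Pr - Pr ∘ₗ U ∘ₗ Pr) B)
    (B' : H →ₗ[ℂ] H) (hB' : IsMPInv (Pr - Pr ∘ₗ Dl ∘ₗ Pr) B')
    (ψ : H) (hψ : ψ ∈ ker Pr) :
    B ((Pr ∘ₗ U) ψ) = B' (Dl ψ) := by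
  obtain ⟨h1, h2, h3, h4⟩ := hB
  obtain ⟨h1', h2', h3', h4'⟩ := hB'
  simp only [← Module.End.mul_eq_comp, ← star_eq_adjoint] at h1 h2 h3 h4 h1' h2' h3' h4' hPr hPra hDla ⊢
  simp only [← mul_assoc] at h1 h2 h3 h4 h1' h2' h3' h4'
  set a : H →ₗ[ℂ] H := Pr - Pr * Dl * Pr with ha_def
  have hψ0 : Pr ψ = 0 := mem_ker.mp hψ
  -- Π − ΠUΠ = 2 a
  have h2A : Pr - Pr * U * Pr = (2:ℂ) • a := by
    have hU' : U = ((2 : ℂ) • Pr - 1) * ((2 : ℂ) • Dl - 1) := hU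
    subst hU'
    simp only [ha_def, mul_sub, sub_mul, smul_mul_assoc, mul_smul_comm, smul_smul, mul_one,
      one_mul, smul_sub, mul_assoc]
    have h2 : ∀ x : H →ₗ[ℂ] H, Pr * (Pr * x) = Pr * x := fun x => by rw [← mul_assoc, hPr]
    rw [h2, h2, hPr]
    module
  rw [h2A] at h1 h2 h3 h4
  -- 2B is an MP inverse of a
  have key : (4:ℂ) • (a*B*a) = (2:ℂ) • a := by
    calc (4:ℂ) • (a*B*a) = (2:ℂ)•a * B * ((2:ℂ)•a) := by
          simp only [smul_mul_assoc, mul_smul_comm, smul_smul]; norm_num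
    _ = (2:ℂ)•a := h1
  have key2 : (2:ℂ) • (a*B*a) = a := by
    have h := congrArg (fun x => ((2:ℂ)⁻¹) • x) key
    simp only [smul_smul] at h
    norm_num at h
    exact h
  have e1 : a * ((2:ℂ) • B) * a = a := by
    calc a * ((2:ℂ)•B) * a = (2:ℂ) • (a*B*a) := by
          simp only [smul_mul_assoc, mul_smul_comm]
    _ = a := key2
  have hBaB : (2:ℂ) • (B*a*B) = B := by
    calc (2:ℂ) • (B*a*B) = B * ((2:ℂ)•a) * B := by
          simp only [smul_mul_assoc, mul_smul_comm]
    _ = B := h2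
  have e2 : ((2:ℂ) • B) * a * ((2:ℂ) • B) = (2:ℂ) • B := by
    calc ((2:ℂ)•B) * a * ((2:ℂ)•B) = (2:ℂ) • ((2:ℂ) • (B*a*B)) := by
          simp only [smul_mul_assoc, mul_smul_comm]
    _ = (2:ℂ)•B := by rw [hBaB]
  have e3 : star (a * ((2:ℂ) • B)) = a * ((2:ℂ) • B) := by
    have : a * ((2:ℂ)•B) = ((2:ℂ)•a) * B := by
      simp [smul_mul_assoc, mul_smul_comm]
    rw [this, h3]
  have e4 : star (((2:ℂ) • B) * a) = ((2:ℂ) • B) * a := by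
    have : ((2:ℂ)•B) * a = B * ((2:ℂ)•a) := by
      simp [smul_mul_assoc, mul_smul_comm]
    rw [this, h4]
  -- hence 2B = B'
  have hBB' : (2:ℂ) • B = B' := mp_unique' e1 e2 e3 e4 h1' h2' h3' h4'
  -- a is self-adjoint
  have hsa : star a = a := by
    simp [ha_def, star_sub, star_mul, hPra, hDla, mul_assoc]
  -- B' kills ker a
  have hker : ∀ v : H, a v = 0 → B' v = 0 := by
    intro v hv
    have hrep : B' = B' * (star B' * a) := by
      conv_lhs => rw [← h2']
      rw [mul_assoc, ← h3', star_mul, hsa]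
    calc B' v = (B' * (star B' * a)) v := by rw [← hrep]
    _ = B' (star B' (a v)) := rfl
    _ = 0 := by rw [hv]; simp
  -- pointwise: Pr (U ψ) = 2 • Pr (Dl ψ)
  have hPU : Pr (U ψ) = (2:ℂ) • Pr (Dl ψ) := by
    subst hU
    have hPrPr : ∀ x, Pr (Pr x) = Pr x := fun x => by
      have := congrFun (congrArg DFunLike.coe hPr) x; simpa using this
    simp [Module.End.mul_apply, LinearMap.sub_apply, LinearMap.smul_apply, hψ0, hPrPr, smul_sub, map_sub, map_smul]
    module
  -- decompose Dl ψ
  have hav : a (Dl ψ - Pr (Dl ψ)) = 0 := by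
    have hPrPr : ∀ x, Pr (Pr x) = Pr x := fun x => by
      have := congrFun (congrArg DFunLike.coe hPr) x; simpa using this
    simp [ha_def, LinearMap.sub_apply, Module.End.mul_apply, map_sub, hPrPr]
  have hz : B' (Dl ψ - Pr (Dl ψ)) = 0 := hker _ hav
  have hsplit : B' (Dl ψ) = B' (Pr (Dl ψ)) := by
    have h := map_sub B' (Dl ψ) (Pr (Dl ψ))
    rw [hz] at h
    exact sub_eq_zero.mp h.symm
  calc B ((Pr * U) ψ) = B (Pr (U ψ)) := rfl
  _ = B ((2:ℂ) • Pr (Dl ψ)) := by rw [hPU]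
  _ = ((2:ℂ) • B) (Pr (Dl ψ)) := by simp
  _ = B' (Pr (Dl ψ)) := by rw [hBB']
  _ = B' (Dl ψ) := hsplit.symm
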